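/- Let X = Q⟨c⟩ where Q = ⟨a,b⟩ ≅ Q_{4n} is a generalized quaternion group (n ≥ 2) and ⟨c⟩ is cyclic with Q ∩ ⟨c⟩ = 1. If Q ∩ Q^c ≠ 1, i.e. Q meets its conjugate by c nontrivially, then X has a nontrivial normal subgroup contained in ⟨a⟩. (Key step: any subgroup of prime order of Q ∩ Q^c lies in ⟨a⟩ and is normalized by c.) -/

import Mathlib

/-- If `X = Q⟨c⟩` with `Q` generalized quaternion and `Q ∩ Q^c ≠ 1`, then `X` has a
nontrivial normal subgroup contained in `⟨a⟩`. -/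
theorem exists_normal_le_zpowers_a {X : Type*} [Group X] [Finite X]
    (n : ℕ) (hn : 2 ≤ n) (a b c : X)
    (Q : Subgroup X) (hQgen : Q = Subgroup.closure {a, b})
    (hoa : orderOf a = 2 * n) (hb2 : b ^ 2 = a ^ n)
    (hrel : b * a * b⁻¹ = a⁻¹) (hcardQ : Nat.card Q = 4 * n)
    (hint : Q ⊓ Subgroup.zpowers c = ⊥)
    (hfact : ∀ x : X, ∃ g ∈ Q, ∃ k : ℤ, x = g * c ^ k)
    (hmeet : Q ⊓ Q.map (MulAut.conj c).toMonoidHom ≠ ⊥) :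
    ∃ N : Subgroup X, N.Normal ∧ N ≤ Subgroup.zpowers a ∧ N ≠ ⊥ := by
  have hnpos : 0 < n := by omega
  set A := Subgroup.zpowers a with hA
  -- basic power facts
  have ha2n : a ^ (2 * n) = 1 := by rw [← hoa]; exact pow_orderOf_eq_one a
  have han : a ^ n ≠ 1 := by
    intro h
    have := Nat.le_of_dvd hnpos (hoa ▸ orderOf_dvd_of_pow_eq_one h)
    omega
  -- conjugation by b inverts powers of a
  have hbconj : ∀ i : ℤ, b * a ^ i * b⁻¹ = a ^ (-i) := by
    intro i
    rw [← conj_zpow, hrel, zpow_neg, inv_zpow]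
  have hba : ∀ i : ℤ, b * a ^ i = a ^ (-i) * b := by
    intro i
    calc b * a ^ i = (b * a ^ i * b⁻¹) * b := by group
    _ = a ^ (-i) * b := by rw [hbconj i]
  have hab : ∀ i : ℤ, a ^ i * b = b * a ^ (-i) := by
    intro i
    rw [hba (-i), neg_neg]
  have hb4 : b ^ 4 = 1 := by
    have h : b ^ 4 = (b ^ 2) ^ 2 := by group
    rw [h, hb2, ← pow_mul, mul_comm n 2, ha2n]
  have hbinv : b⁻¹ = b * a ^ (n : ℤ) := by
    have h3 : b * (b * a ^ (n : ℤ)) = 1 := by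
      rw [zpow_natCast, ← hb2]
      calc b * (b * b ^ 2) = b ^ 4 := by group
      _ = 1 := hb4
    rw [← inv_eq_of_mul_eq_one_right h3]
  -- classification of elements of Q
  have hmemQ : ∀ x ∈ Q, x ∈ A ∨ ∃ i : ℤ, x = b * a ^ i := by
    intro x hx
    rw [hQgen] at hx
    induction hx using Subgroup.closure_induction with
    | mem x hx =>
      simp only [Set.mem_insert_iff, Set.mem_singleton_iff] at hx
      rcases hx with h | h
      · exact Or.inl (by rw [h]; exact Subgroup.mem_zpowers a)
      · exact Or.inr ⟨0, by rw [h, zpow_zero, mul_one]⟩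
    | one => exact Or.inl (one_mem A)
    | mul x y hx hy ihx ihy =>
      rcases ihx with hi | ⟨i, hi⟩ <;> rcases ihy with hj | ⟨j, hj⟩
      · exact Or.inl (mul_mem hi hj)
      · obtain ⟨i, rfl⟩ := hi
        refine Or.inr ⟨-i + j, ?_⟩
        rw [hj]
        calc a ^ i * (b * a ^ j) = (a ^ i * b) * a ^ j := by group
        _ = (b * a ^ (-i)) * a ^ j := by rw [hab i]
        _ = b * a ^ (-i + j) := by rw [mul_assoc, ← zpow_add]
      · obtain ⟨j, rfl⟩ := hj
        exact Or.inr ⟨i + j, by rw [hi, mul_assoc, ← zpow_add]⟩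
      · refine Or.inl ?_
        rw [hi, hj]
        have h1 : b * a ^ i * (b * a ^ j) = b * (a ^ i * b) * a ^ j := by group
        rw [h1, hab i]
        have h3 : b * (b * a ^ (-i)) * a ^ j = b ^ 2 * a ^ (-i + j) := by
          rw [pow_two, ← mul_assoc b b, mul_assoc (b * b), ← zpow_add]
        rw [h3, hb2]
        exact mul_mem (Subgroup.npow_mem_zpowers a n) (Subgroup.zpow_mem_zpowers a (-i + j))
    | inv x hx ihx =>
      rcases ihx with hi | ⟨i, hi⟩
      · exact Or.inl (inv_mem hi)
      · refine Or.inr ⟨i + n, ?_⟩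
        rw [hi, mul_inv_rev, ← zpow_neg, hbinv]
        calc a ^ (-i) * (b * a ^ (n:ℤ)) = (a ^ (-i) * b) * a ^ (n:ℤ) := by group
        _ = (b * a ^ i) * a ^ (n:ℤ) := by rw [hab (-i), neg_neg]
        _ = b * a ^ (i + n) := by rw [mul_assoc, ← zpow_add]
  -- elements of Q of prime order lie in A
  have hprimeA : ∀ x ∈ Q, (orderOf x).Prime → x ∈ A := by
    intro x hx hp
    rcases hmemQ x hx with h | ⟨i, rfl⟩
    · exact h
    · exfalso
      have hsq : (b * a ^ i) ^ 2 = a ^ n := by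
        rw [pow_two]
        calc b * a ^ i * (b * a ^ i) = b * (a ^ i * b) * a ^ i := by group
        _ = b * (b * a ^ (-i)) * a ^ i := by rw [hab i]
        _ = b ^ 2 * (a ^ (-i) * a ^ i) := by rw [pow_two]; group
        _ = a ^ n := by rw [← zpow_add, neg_add_cancel, zpow_zero, mul_one, hb2]
      have h4 : (b * a ^ i) ^ 4 = 1 := by
        have h : (b * a ^ i) ^ 4 = ((b * a ^ i) ^ 2) ^ 2 := by group
        rw [h, hsq, ← pow_mul, mul_comm n 2, ha2n]
      have hdvd : orderOf (b * a ^ i) ∣ 2 ^ 2 := by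
        simpa using orderOf_dvd_of_pow_eq_one h4
      have h2 : orderOf (b * a ^ i) = 2 :=
        (Nat.prime_dvd_prime_iff_eq hp Nat.prime_two).mp (hp.dvd_of_dvd_pow hdvd)
      have hone : (b * a ^ i) ^ 2 = 1 := h2 ▸ pow_orderOf_eq_one _
      rw [hsq] at hone
      exact han hone
  -- canonical form: the subgroup generated by an element of A depends only on its order
  have hcanon : ∀ x : X, x ∈ A → Subgroup.zpowers x
      = Subgroup.zpowers (a ^ ((2 * n) / orderOf x)) := by
    intro x hxA
    obtain ⟨m, rfl⟩ := (mem_powers_iff_mem_zpowers).mpr hxA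
    have hgcd : orderOf (a ^ m) = (2 * n) / Nat.gcd (2 * n) m := by
      rw [orderOf_pow, hoa]
    set d := Nat.gcd (2 * n) m with hd
    have hddvd : d ∣ 2 * n := Nat.gcd_dvd_left _ _
    have hdm : d ∣ m := Nat.gcd_dvd_right _ _
    have hdiv : (2 * n) / orderOf (a ^ m) = d := by
      rw [hgcd]
      exact Nat.div_div_self hddvd (by omega)
    rw [hdiv]
    have hle : Subgroup.zpowers (a ^ m) ≤ Subgroup.zpowers (a ^ d) := by
      rw [Subgroup.zpowers_le, ← Nat.mul_div_cancel' hdm, pow_mul]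
      exact Subgroup.npow_mem_zpowers _ _
    have hcard : Nat.card (Subgroup.zpowers (a ^ d)) ≤ Nat.card (Subgroup.zpowers (a ^ m)) := by
      rw [Nat.card_zpowers, Nat.card_zpowers, hgcd, orderOf_pow, hoa,
        Nat.gcd_eq_right hddvd]
    exact Subgroup.eq_of_le_of_card_ge hle hcard
  -- a prime-order element of the intersection
  set K := Q ⊓ Q.map (MulAut.conj c).toMonoidHom with hK
  obtain ⟨x0, hx0K, hx0ne⟩ : ∃ x0, x0 ∈ K ∧ x0 ≠ 1 := by
    by_contra h
    push_neg at h
    exact hmeet ((Subgroup.eq_bot_iff_forall K).mpr fun x hx => h x hx)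
  have hm0 : orderOf x0 ≠ 1 := fun h => hx0ne (orderOf_eq_one_iff.mp h)
  obtain ⟨p, hp, hpd⟩ := Nat.exists_prime_and_dvd hm0
  set z := x0 ^ (orderOf x0 / p) with hz
  have hoz : orderOf z = p := orderOf_pow_orderOf_div (orderOf_pos x0).ne' hpd
  have hzK : z ∈ K := pow_mem hx0K _
  have hzQ : z ∈ Q := hzK.1
  have hzne : z ≠ 1 := by
    intro h
    rw [h, orderOf_one] at hoz
    exact hp.ne_one hoz.symm
  have hzA : z ∈ A := hprimeA z hzQ (hoz ▸ hp)
  -- z is the conjugate by c of some y ∈ Q, which also lies in A with the same order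
  obtain ⟨y, hyQ, hyz⟩ := hzK.2
  simp only [MulEquiv.coe_toMonoidHom, MulAut.conj_apply] at hyz
  have hconj_order : ∀ (g w : X), orderOf (g * w * g⁻¹) = orderOf w := by
    intro g w
    have h := orderOf_injective (MulAut.conj g).toMonoidHom
      (fun u v huv => by
        simpa only [MulEquiv.coe_toMonoidHom] using (MulAut.conj g).injective
          (by simpa only [MulEquiv.coe_toMonoidHom] using huv)) w
    simpa only [MulEquiv.coe_toMonoidHom, MulAut.conj_apply] using h
  have hoy : orderOf y = p := by
    rw [← hconj_order c y, hyz, hoz]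
  have hyA : y ∈ A := hprimeA y hyQ (hoy ▸ hp)
  have hzy : Subgroup.zpowers y = Subgroup.zpowers z := by
    rw [hcanon y hyA, hcanon z hzA, hoy, hoz]
  -- membership in the normalizer from equality of generated subgroups
  have hnorm : ∀ g : X, Subgroup.zpowers (g * z * g⁻¹) = Subgroup.zpowers z →
      g ∈ Subgroup.normalizer (Subgroup.zpowers z : Set X) := by
    intro g hg
    rw [Subgroup.mem_normalizer_iff]
    intro h
    constructor
    · intro hh
      obtain ⟨j, hj⟩ := Subgroup.mem_zpowers_iff.mp hh
      rw [← hg]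
      exact Subgroup.mem_zpowers_iff.mpr ⟨j, by rw [conj_zpow, hj]⟩
    · intro hmem
      rw [← hg] at hmem
      obtain ⟨j, hj⟩ := Subgroup.mem_zpowers_iff.mp hmem
      rw [conj_zpow] at hj
      have h2 : z ^ j = h := mul_left_cancel (mul_right_cancel hj)
      exact h2 ▸ Subgroup.zpow_mem_zpowers z j
  -- Q normalizes the subgroup generated by z
  have hQnorm : Q ≤ Subgroup.normalizer (Subgroup.zpowers z : Set X) := by
    intro g hg
    apply hnorm
    have hgz : g * z * g⁻¹ ∈ Q := mul_mem (mul_mem hg hzQ) (inv_mem hg)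
    have hogz : orderOf (g * z * g⁻¹) = p := by rw [hconj_order, hoz]
    have hgzA : g * z * g⁻¹ ∈ A := hprimeA _ hgz (hogz ▸ hp)
    rw [hcanon _ hgzA, hogz, hcanon z hzA, hoz]
  -- c normalizes the subgroup generated by z
  have hcnorm : c ∈ Subgroup.normalizer (Subgroup.zpowers z : Set X) := by
    apply hnorm
    calc Subgroup.zpowers (c * z * c⁻¹)
        = Subgroup.zpowers ((MulAut.conj c).toMonoidHom z) := by
          simp only [MulEquiv.coe_toMonoidHom, MulAut.conj_apply]
      _ = (Subgroup.zpowers z).map (MulAut.conj c).toMonoidHom :=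
          (MonoidHom.map_zpowers _ _).symm
      _ = (Subgroup.zpowers y).map (MulAut.conj c).toMonoidHom := by rw [hzy]
      _ = Subgroup.zpowers ((MulAut.conj c).toMonoidHom y) := MonoidHom.map_zpowers _ _
      _ = Subgroup.zpowers z := by
          simp only [MulEquiv.coe_toMonoidHom, MulAut.conj_apply, hyz]
  -- conclude
  refine ⟨Subgroup.zpowers z, ?_, Subgroup.zpowers_le.mpr hzA, ?_⟩
  · rw [← Subgroup.normalizer_eq_top_iff, Subgroup.eq_top_iff']
    intro x
    obtain ⟨g, hgQ, k, rfl⟩ := hfact x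
    exact mul_mem (hQnorm hgQ) (Subgroup.zpow_mem _ hcnorm k)
  · intro h
    exact hzne ((Subgroup.eq_bot_iff_forall _).mp h z (Subgroup.mem_zpowers z))
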